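/- For j = 1,...,n let F_j be the equal-revenue distribution truncated at 2^{j+1}, and let S ⊆ {1,...,n}. Define the pricing p by p_j = 2^j for j ∈ S and p_j = ∞ for j ∉ S. Then |S|/3 ≤ R(p) ≤ |S|; that is, R(p,F) ≥ |S|/3 for every compatible joint distribution F, and R(p,F) ≤ |S| for every compatible joint distribution F. Moreover, n/3 ≤ R* ≤ n, so p is Θ(n/|S|)-max-min optimal. -/

import Mathlib

open MeasureTheory
open scoped ENNReal NNReal

noncomputable section

/-- A buyer's purchase rule for `n` items: given a valuation profile and a vector of item prices
(in `[0,∞]`), `choose` returns the purchased item (or `none` if nothing is purchased).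
The axioms say: a purchased item has a finite price and yields nonnegative utility
(`feasible`), the purchased item maximizes utility among all items (`optimal`), and the buyer
does purchase whenever some item yields nonnegative utility (`active`). Ties among
utility-maximizing items are broken according to the (fixed) rule embodied by `choose`. -/
structure BuyerRule (n : ℕ) where
  choose : (Fin n → ℝ) → (Fin n → ℝ≥0∞) → Option (Fin n)
  feasible : ∀ v p j, choose v p = some j → p j ≠ ⊤ ∧ (p j).toReal ≤ v j
  optimal : ∀ v p j k, choose v p = some j → p k ≠ ⊤ →
      v k - (p k).toReal ≤ v j - (p j).toReal
  active : ∀ v p, (∃ k, p k ≠ ⊤ ∧ (p k).toReal ≤ v k) → (choose v p).isSome = true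

/-- The seller's revenue from valuation profile `v` under pricing `p`. -/
def BuyerRule.revenue {n : ℕ} (B : BuyerRule n) (p : Fin n → ℝ≥0∞) (v : Fin n → ℝ) : ℝ≥0∞ :=
  (B.choose v p).elim 0 (fun j => p j)

/-- A joint distribution `F` on valuation profiles is compatible with the marginals `marg`
if it is a probability measure whose `j`-th one-dimensional marginal is `marg j` for every `j`. -/
def Compatible {n : ℕ} (marg : Fin n → Measure ℝ) (F : Measure (Fin n → ℝ)) : Prop :=
  IsProbabilityMeasure F ∧ ∀ j, F.map (fun v => v j) = marg j

/-- `R(p,F)`: the expected revenue of pricing `p` under joint distribution `F`. -/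
def expRev {n : ℕ} (B : BuyerRule n) (p : Fin n → ℝ≥0∞) (F : Measure (Fin n → ℝ)) : ℝ≥0∞ :=
  ∫⁻ v, B.revenue p v ∂F

/-- `R(p)`: the robust revenue guarantee of `p`, the infimum of `R(p,F)` over compatible `F`. -/
def robustRev {n : ℕ} (B : BuyerRule n) (marg : Fin n → Measure ℝ) (p : Fin n → ℝ≥0∞) : ℝ≥0∞ :=
  ⨅ (F : Measure (Fin n → ℝ)) (_ : Compatible marg F), expRev B p F

/-- `R*`: the optimal robust revenue guarantee over all pricings. -/
def optRobust {n : ℕ} (B : BuyerRule n) (marg : Fin n → Measure ℝ) : ℝ≥0∞ :=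
  ⨆ p : Fin n → ℝ≥0∞, robustRev B marg p

/-- The equal-revenue distribution truncated at `t`: the distribution of `min(X, t)` where
`Pr[X > x] = 1/x` for `x ≥ 1`. It has density `1/x²` on `[1, t)` and an atom of mass `1/t`
at `t`. -/
def erTrunc (t : ℝ) : Measure ℝ :=
  (volume.restrict (Set.Ico 1 t)).withDensity (fun x => ENNReal.ofReal (x ^ 2)⁻¹)
    + ENNReal.ofReal t⁻¹ • Measure.dirac t

lemma lint_sq (a b : ℝ) (ha : 1 ≤ a) (hab : a ≤ b) :
    ∫⁻ s in Set.Ioo a b, ENNReal.ofReal (s ^ 2)⁻¹ = ENNReal.ofReal (a⁻¹ - b⁻¹) := by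
  have h0 : (0:ℝ) < a := lt_of_lt_of_le one_pos ha
  have hcont : ContinuousOn (fun s : ℝ => (s ^ 2)⁻¹) (Set.uIcc a b) := by
    apply ContinuousOn.inv₀ (by fun_prop)
    intro x hx
    rw [Set.uIcc_of_le hab] at hx
    have : 0 < x := lt_of_lt_of_le h0 hx.1
    positivity
  have hInt : IntegrableOn (fun s : ℝ => (s ^ 2)⁻¹) (Set.Ioo a b) := by
    exact (hcont.integrableOn_uIcc).mono_set (by rw [Set.uIcc_of_le hab]; exact Set.Ioo_subset_Icc_self)
  have hnn : (fun _ : ℝ => (0:ℝ)) ≤ᵐ[volume.restrict (Set.Ioo a b)] fun s : ℝ => (s ^ 2)⁻¹ := by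
    filter_upwards [ae_restrict_mem measurableSet_Ioo] with x hx
    have : 0 < x := lt_of_lt_of_le h0 hx.1.le
    positivity
  rw [← ofReal_integral_eq_lintegral_ofReal hInt hnn]
  congr 1
  have h1 : ∫ s in Set.Ioo a b, (s ^ 2)⁻¹ = ∫ s in a..b, (s ^ 2)⁻¹ := by
    rw [intervalIntegral.integral_of_le hab, ← integral_Ioc_eq_integral_Ioo]
  rw [h1]
  have hz : ∫ s in a..b, (s ^ 2)⁻¹ = ∫ s in a..b, s ^ (-2 : ℤ) := by
    apply intervalIntegral.integral_congr
    intro s _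
    simp [zpow_neg, zpow_ofNat]
  rw [hz, integral_zpow]
  · norm_num
    ring
  · right
    constructor
    · norm_num
    · rw [Set.uIcc_of_le hab]
      intro hmem
      exact absurd hmem.1 (by linarith)

lemma erTrunc_apply (t : ℝ) (s : Set ℝ) (hs : MeasurableSet s) :
    erTrunc t s = (∫⁻ x in s ∩ Set.Ico 1 t, ENNReal.ofReal (x ^ 2)⁻¹)
      + ENNReal.ofReal t⁻¹ * s.indicator 1 t := by
  rw [erTrunc, Measure.add_apply, Measure.smul_apply, withDensity_apply _ hs,
    Measure.restrict_restrict hs, Measure.dirac_apply' _ hs, smul_eq_mul]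

lemma erTrunc_Ioi_self (t : ℝ) : erTrunc t (Set.Ioi t) = 0 := by
  rw [erTrunc_apply _ _ measurableSet_Ioi]
  have h1 : Set.Ioi t ∩ Set.Ico 1 t = ∅ := by
    ext x
    simp only [Set.mem_inter_iff, Set.mem_Ioi, Set.mem_Ico, Set.mem_empty_iff_false, iff_false]
    rintro ⟨hx, _, hx2⟩
    exact absurd hx (not_lt.2 hx2.le)
  have h2 : Set.indicator (Set.Ioi t) (1 : ℝ → ℝ≥0∞) t = 0 := by
    simp [Set.indicator_apply]
  rw [h1, h2]
  simp

lemma erTrunc_Ioi (t x : ℝ) (hx : 1 ≤ x) (hxt : x < t) :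
    erTrunc t (Set.Ioi x) = ENNReal.ofReal x⁻¹ := by
  have hx0 : (0:ℝ) < x := lt_of_lt_of_le one_pos hx
  have ht0 : (0:ℝ) < t := lt_trans hx0 hxt
  rw [erTrunc_apply _ _ measurableSet_Ioi]
  have hset : Set.Ioi x ∩ Set.Ico 1 t = Set.Ioo x t := by
    ext s
    simp only [Set.mem_inter_iff, Set.mem_Ioi, Set.mem_Ico, Set.mem_Ioo]
    constructor
    · rintro ⟨h1, _, h3⟩; exact ⟨h1, h3⟩
    · rintro ⟨h1, h2⟩; exact ⟨h1, le_trans hx h1.le, h2⟩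
  have hind : Set.indicator (Set.Ioi x) (1 : ℝ → ℝ≥0∞) t = 1 := by
    simp [Set.indicator_apply, hxt]
  have hsub : t⁻¹ ≤ x⁻¹ := by
    apply inv_anti₀ hx0 hxt.le
  rw [hset, lint_sq x t hx hxt.le, hind, mul_one,
    ← ENNReal.ofReal_add (by linarith) (by positivity)]
  norm_num

lemma erTrunc_Ici_le (t r : ℝ) (hr : 1 ≤ r) :
    erTrunc t (Set.Ici r) ≤ ENNReal.ofReal r⁻¹ := by
  have hr0 : (0:ℝ) < r := lt_of_lt_of_le one_pos hr
  rw [erTrunc_apply _ _ measurableSet_Ici]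
  rcases lt_or_ge r t with h | h
  · have hset : Set.Ici r ∩ Set.Ico 1 t = Set.Ico r t := by
      ext s
      simp only [Set.mem_inter_iff, Set.mem_Ici, Set.mem_Ico]
      constructor
      · rintro ⟨h1, _, h3⟩; exact ⟨h1, h3⟩
      · rintro ⟨h1, h2⟩; exact ⟨h1, le_trans hr h1, h2⟩
    have ht0 : (0:ℝ) < t := lt_trans hr0 h
    have hsub : t⁻¹ ≤ r⁻¹ := inv_anti₀ hr0 h.le
    have hind : Set.indicator (Set.Ici r) (1 : ℝ → ℝ≥0∞) t ≤ 1 := by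
      rw [Set.indicator_apply]; split <;> simp
    calc (∫⁻ x in Set.Ici r ∩ Set.Ico 1 t, ENNReal.ofReal (x ^ 2)⁻¹)
          + ENNReal.ofReal t⁻¹ * Set.indicator (Set.Ici r) (1 : ℝ → ℝ≥0∞) t
        ≤ ENNReal.ofReal (r⁻¹ - t⁻¹) + ENNReal.ofReal t⁻¹ * 1 := by
          apply add_le_add
          · rw [hset, ← setLIntegral_congr (Ioo_ae_eq_Ico (a := r) (b := t)),
              lint_sq r t hr h.le]
          · exact mul_le_mul_right hind _
      _ = ENNReal.ofReal r⁻¹ := by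
          rw [mul_one, ← ENNReal.ofReal_add (by linarith) (by positivity)]
          norm_num
  · have hset : Set.Ici r ∩ Set.Ico 1 t = ∅ := by
      ext s
      simp only [Set.mem_inter_iff, Set.mem_Ici, Set.mem_Ico, Set.mem_empty_iff_false, iff_false]
      rintro ⟨h1, _, h3⟩
      linarith
    rw [hset]
    simp only [Measure.restrict_empty, lintegral_zero_measure, zero_add]
    rcases le_or_gt r t with h2 | h2
    · have hrt : r = t := le_antisymm h2 h
      calc ENNReal.ofReal t⁻¹ * Set.indicator (Set.Ici r) (1 : ℝ → ℝ≥0∞) t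
          ≤ ENNReal.ofReal t⁻¹ * 1 := by
            apply mul_le_mul_right
            rw [Set.indicator_apply]; split <;> simp
        _ = ENNReal.ofReal r⁻¹ := by rw [mul_one, hrt]
    · have : Set.indicator (Set.Ici r) (1 : ℝ → ℝ≥0∞) t = 0 := by
        simp [Set.indicator_apply, not_le.2 h2]
      rw [this, mul_zero]
      exact zero_le

lemma erTrunc_prob (t : ℝ) (ht : 1 ≤ t) : IsProbabilityMeasure (erTrunc t) := by
  constructor
  rw [erTrunc_apply _ _ MeasurableSet.univ]
  have hIoo : ∫⁻ x in Set.univ ∩ Set.Ico 1 t, ENNReal.ofReal (x ^ 2)⁻¹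
      = ENNReal.ofReal (1 - t⁻¹) := by
    rw [Set.univ_inter, ← setLIntegral_congr (Ioo_ae_eq_Ico (a := (1:ℝ)) (b := t)),
      lint_sq 1 t le_rfl ht]
    norm_num
  rw [hIoo]
  have htop : Set.indicator (Set.univ : Set ℝ) (1 : ℝ → ℝ≥0∞) t = 1 := by simp
  have h1 : (0:ℝ) ≤ 1 - t⁻¹ := by
    have : t⁻¹ ≤ 1 := by
      rw [inv_le_one_iff₀]
      right; exact ht
    linarith
  rw [htop, mul_one, ← ENNReal.ofReal_add h1 (by positivity)]
  norm_num

lemma pi_marginal {n : ℕ} (μ : Fin n → Measure ℝ) [h : ∀ i, IsProbabilityMeasure (μ i)]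
    (i : Fin n) : (Measure.pi μ).map (fun v => v i) = μ i := by
  apply Measure.ext
  intro s hs
  rw [Measure.map_apply (measurable_pi_apply i) hs]
  have hpre : (fun v : Fin n → ℝ => v i) ⁻¹' s
      = Set.pi Set.univ (Function.update (fun _ => Set.univ) i s) :=
    Set.eval_preimage
  rw [hpre, Measure.pi_pi]
  rw [Fintype.prod_eq_single i (fun j hj => by
    rw [Function.update_of_ne hj]; exact measure_univ)]
  rw [Function.update_self]

lemma erp_geom_le (k : ℕ) : ∑ m ∈ Finset.range k, (2:ℝ≥0∞) ^ m ≤ 2 ^ k := by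
  induction k with
  | zero => simp
  | succ k ih =>
    rw [Finset.sum_range_succ, pow_succ, mul_two]
    exact add_le_add ih le_rfl

lemma ofReal_two_pow (m : ℕ) : ENNReal.ofReal ((2:ℝ) ^ m) = 2 ^ m := by
  rw [ENNReal.ofReal_pow (by norm_num)]
  norm_num

lemma rev_lower_pointwise {n : ℕ} (B : BuyerRule n) (S : Finset (Fin n))
    (p : Fin n → ℝ≥0∞)
    (hp : ∀ i : Fin n, p i = if i ∈ S then ENNReal.ofReal ((2:ℝ) ^ ((i:ℕ)+1)) else ⊤)
    (v : Fin n → ℝ) (hv : ∀ i : Fin n, v i ≤ 2 ^ ((i:ℕ)+2)) :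
    ∑ i ∈ S, Set.indicator {w : Fin n → ℝ | 3 * 2 ^ (i:ℕ) < w i}
      (fun _ => (2:ℝ≥0∞) ^ (i:ℕ)) v ≤ B.revenue p v := by
  classical
  have hsum : ∑ i ∈ S, Set.indicator {w : Fin n → ℝ | 3 * 2 ^ (i:ℕ) < w i}
      (fun _ => (2:ℝ≥0∞) ^ (i:ℕ)) v
      = ∑ i ∈ S.filter (fun i : Fin n => (3:ℝ) * 2 ^ (i:ℕ) < v i), (2:ℝ≥0∞) ^ (i:ℕ) := by
    rw [Finset.sum_filter]
    apply Finset.sum_congr rfl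
    intro i _
    simp [Set.indicator_apply, Set.mem_setOf_eq]
  rw [hsum]
  set T := S.filter (fun i : Fin n => (3:ℝ) * 2 ^ (i:ℕ) < v i) with hT
  rcases T.eq_empty_or_nonempty with h | hne
  · rw [h]; simp
  · set M := T.max' hne with hM
    have hMT : M ∈ T := T.max'_mem hne
    have hMS : M ∈ S := (Finset.mem_filter.1 hMT).1
    have hMv : 3 * 2 ^ (M:ℕ) < v M := (Finset.mem_filter.1 hMT).2
    have hpM : p M = ENNReal.ofReal ((2:ℝ) ^ ((M:ℕ)+1)) := by rw [hp]; simp [hMS]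
    have hpMne : p M ≠ ⊤ := by rw [hpM]; exact ENNReal.ofReal_ne_top
    have hpMle : (p M).toReal ≤ v M := by
      rw [hpM, ENNReal.toReal_ofReal (by positivity)]
      have h2M : (0:ℝ) < 2 ^ (M:ℕ) := by positivity
      have : (2:ℝ) ^ ((M:ℕ)+1) = 2 * 2 ^ (M:ℕ) := by ring
      linarith
    have hsome := B.active v p ⟨M, hpMne, hpMle⟩
    obtain ⟨j, hj⟩ := Option.isSome_iff_exists.1 hsome
    obtain ⟨hpjne, hpjle⟩ := B.feasible v p j hj
    have hjS : j ∈ S := by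
      by_contra hjs
      exact hpjne (by rw [hp]; simp [hjs])
    have hpj : p j = ENNReal.ofReal ((2:ℝ) ^ ((j:ℕ)+1)) := by rw [hp]; simp [hjS]
    have htj : (p j).toReal = (2:ℝ) ^ ((j:ℕ)+1) := by
      rw [hpj, ENNReal.toReal_ofReal (by positivity)]
    have htM : (p M).toReal = (2:ℝ) ^ ((M:ℕ)+1) := by
      rw [hpM, ENNReal.toReal_ofReal (by positivity)]
    have hopt := B.optimal v p j M hj hpMne
    have key : (2:ℝ) ^ (M:ℕ) < 2 ^ ((j:ℕ)+1) := by
      rw [htj, htM] at hopt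
      have h2 : v j ≤ 2 ^ ((j:ℕ)+2) := hv j
      have h3 : (2:ℝ) ^ ((M:ℕ)+1) = 2 * 2 ^ (M:ℕ) := by ring
      have h4 : (2:ℝ) ^ ((j:ℕ)+2) = 2 * 2 ^ ((j:ℕ)+1) := by ring
      linarith
    have hMj : (M:ℕ) + 1 ≤ (j:ℕ) + 1 := by
      have := (pow_lt_pow_iff_right₀ (a := (2:ℝ)) one_lt_two).1 key
      omega
    have hrev : B.revenue p v = (2:ℝ≥0∞) ^ ((j:ℕ)+1) := by
      rw [BuyerRule.revenue, hj]
      simp only [Option.elim]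
      rw [hpj, ofReal_two_pow]
    rw [hrev]
    calc ∑ i ∈ T, (2:ℝ≥0∞) ^ (i:ℕ)
        = ∑ m ∈ T.image Fin.val, (2:ℝ≥0∞) ^ m := by
          rw [Finset.sum_image (fun a _ b _ h => Fin.val_injective h)]
      _ ≤ ∑ m ∈ Finset.range ((M:ℕ)+1), (2:ℝ≥0∞) ^ m := by
          apply Finset.sum_le_sum_of_subset
          intro m hm
          obtain ⟨i, hi, rfl⟩ := Finset.mem_image.1 hm
          exact Finset.mem_range.2 (Nat.lt_succ_of_le (Finset.le_max' T i hi))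
      _ ≤ 2 ^ ((M:ℕ)+1) := erp_geom_le _
      _ ≤ 2 ^ ((j:ℕ)+1) := pow_le_pow_right₀ one_le_two hMj

lemma expRev_lower {n : ℕ} (B : BuyerRule n) (marg : Fin n → Measure ℝ)
    (hmarg : ∀ i : Fin n, marg i = erTrunc ((2 : ℝ) ^ ((i : ℕ) + 2)))
    (S : Finset (Fin n)) (p : Fin n → ℝ≥0∞)
    (hp : ∀ i : Fin n, p i = if i ∈ S then ENNReal.ofReal ((2 : ℝ) ^ ((i : ℕ) + 1)) else ⊤)
    (F : Measure (Fin n → ℝ)) (hF : Compatible marg F) :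
    (S.card : ℝ≥0∞) / 3 ≤ expRev B p F := by
  obtain ⟨hprob, hmap⟩ := hF
  have hae : ∀ᵐ v ∂F, ∀ i : Fin n, v i ≤ 2 ^ ((i:ℕ)+2) := by
    rw [ae_all_iff]
    intro i
    have h0 : F ((fun v : Fin n → ℝ => v i) ⁻¹' Set.Ioi ((2:ℝ) ^ ((i:ℕ)+2))) = 0 := by
      rw [← Measure.map_apply (measurable_pi_apply i) measurableSet_Ioi, hmap, hmarg,
        erTrunc_Ioi_self]
    rw [ae_iff]
    convert h0 using 2
    ext v
    simp [not_le]
  have hterm : ∀ i ∈ S, ∫⁻ v, Set.indicator {w : Fin n → ℝ | 3 * 2 ^ (i:ℕ) < w i}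
      (fun _ => (2:ℝ≥0∞) ^ (i:ℕ)) v ∂F = 3⁻¹ := by
    intro i _
    have hs : MeasurableSet {w : Fin n → ℝ | 3 * 2 ^ (i:ℕ) < w i} :=
      measurable_pi_apply i measurableSet_Ioi
    rw [lintegral_indicator_const hs]
    have hF1 : F {w : Fin n → ℝ | 3 * 2 ^ (i:ℕ) < w i}
        = ENNReal.ofReal ((3 * 2 ^ (i:ℕ) : ℝ))⁻¹ := by
      have : {w : Fin n → ℝ | 3 * 2 ^ (i:ℕ) < w i}
          = (fun v : Fin n → ℝ => v i) ⁻¹' Set.Ioi ((3:ℝ) * 2 ^ (i:ℕ)) := rfl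
      rw [this, ← Measure.map_apply (measurable_pi_apply i) measurableSet_Ioi, hmap, hmarg,
        erTrunc_Ioi]
      · have h1 : (1:ℝ) ≤ 3 * 2 ^ (i:ℕ) := by
          have : (1:ℝ) ≤ 2 ^ (i:ℕ) := one_le_pow₀ one_le_two
          linarith
        exact h1
      · have : (2:ℝ) ^ ((i:ℕ)+2) = 4 * 2 ^ (i:ℕ) := by ring
        rw [this]
        have h2 : (0:ℝ) < 2 ^ (i:ℕ) := by positivity
        linarith
    rw [hF1]
    rw [← ofReal_two_pow, ← ENNReal.ofReal_mul (by positivity)]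
    have : (2:ℝ) ^ (i:ℕ) * (3 * 2 ^ (i:ℕ))⁻¹ = 3⁻¹ := by
      have h2 : (0:ℝ) < 2 ^ (i:ℕ) := by positivity
      field_simp
    rw [this, ENNReal.ofReal_inv_of_pos (by norm_num)]
    norm_num
  have hmono : (S.card : ℝ≥0∞) / 3 ≤ ∫⁻ v, ∑ i ∈ S,
      Set.indicator {w : Fin n → ℝ | 3 * 2 ^ (i:ℕ) < w i}
        (fun _ => (2:ℝ≥0∞) ^ (i:ℕ)) v ∂F := by
    have hmeas : ∀ i ∈ S, Measurable (fun v : Fin n → ℝ =>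
        Set.indicator {w : Fin n → ℝ | 3 * 2 ^ (i:ℕ) < w i}
          (fun _ => (2:ℝ≥0∞) ^ (i:ℕ)) v) := fun i _ =>
      measurable_const.indicator (measurable_pi_apply i measurableSet_Ioi)
    rw [lintegral_finset_sum _ hmeas]
    rw [Finset.sum_congr rfl hterm, Finset.sum_const, nsmul_eq_mul, div_eq_mul_inv]
  refine le_trans hmono (lintegral_mono_ae ?_)
  filter_upwards [hae] with v hv
  exact rev_lower_pointwise B S p hp v hv

lemma expRev_upper {n : ℕ} (B : BuyerRule n) (marg : Fin n → Measure ℝ)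
    (hmarg : ∀ i : Fin n, marg i = erTrunc ((2 : ℝ) ^ ((i : ℕ) + 2)))
    (p : Fin n → ℝ≥0∞) (F : Measure (Fin n → ℝ)) (hF : Compatible marg F) :
    expRev B p F ≤ ∑ i : Fin n, (if p i = ⊤ then 0 else 1 : ℝ≥0∞) := by
  classical
  obtain ⟨hprob, hmap⟩ := hF
  set pp : Fin n → ℝ≥0∞ := fun i => if p i = ⊤ then 0 else p i with hpp
  have hpoint : ∀ v : Fin n → ℝ, B.revenue p v ≤ ∑ i : Fin n,
      Set.indicator {w : Fin n → ℝ | (p i).toReal ≤ w i} (fun _ => pp i) v := by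
    intro v
    rw [BuyerRule.revenue]
    cases hc : B.choose v p with
    | none => exact zero_le
    | some j =>
      obtain ⟨hne, hle⟩ := B.feasible v p j hc
      simp only [Option.elim]
      have hj : Set.indicator {w : Fin n → ℝ | (p j).toReal ≤ w j} (fun _ => pp j) v = p j := by
        rw [Set.indicator_apply, if_pos (show v ∈ {w : Fin n → ℝ | (p j).toReal ≤ w j} from hle)]
        simp [hpp, hne]
      rw [← hj]
      exact Finset.single_le_sum (f := fun i => Set.indicator
        {w : Fin n → ℝ | (p i).toReal ≤ w i} (fun _ => pp i) v)
        (fun i _ => zero_le) (Finset.mem_univ j)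
  have hmeas : ∀ i ∈ Finset.univ, Measurable (fun v : Fin n → ℝ =>
      Set.indicator {w : Fin n → ℝ | (p i).toReal ≤ w i} (fun _ => pp i) v) := fun i _ =>
    measurable_const.indicator (measurable_pi_apply i measurableSet_Ici)
  refine le_trans (lintegral_mono hpoint) ?_
  rw [lintegral_finset_sum _ hmeas]
  apply Finset.sum_le_sum
  intro i _
  have hsmeas : MeasurableSet {w : Fin n → ℝ | (p i).toReal ≤ w i} :=
    measurable_pi_apply i measurableSet_Ici
  rw [lintegral_indicator_const hsmeas]
  by_cases h : p i = ⊤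
  · simp [hpp, h]
  · rw [if_neg h]
    have hppi : pp i = p i := if_neg h
    rw [hppi]
    set r := (p i).toReal with hr
    have hpi : p i = ENNReal.ofReal r := (ENNReal.ofReal_toReal h).symm
    have hFs : F {w : Fin n → ℝ | r ≤ w i} = erTrunc ((2:ℝ) ^ ((i:ℕ)+2)) (Set.Ici r) := by
      have hpre : {w : Fin n → ℝ | r ≤ w i} = (fun v : Fin n → ℝ => v i) ⁻¹' Set.Ici r := rfl
      rw [hpre, ← Measure.map_apply (measurable_pi_apply i) measurableSet_Ici, hmap, hmarg]
    rw [hFs]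
    have ht1 : (1:ℝ) ≤ 2 ^ ((i:ℕ)+2) := one_le_pow₀ one_le_two
    rcases lt_or_ge r 1 with hr1 | hr1
    · haveI := erTrunc_prob ((2:ℝ) ^ ((i:ℕ)+2)) ht1
      calc p i * erTrunc ((2:ℝ) ^ ((i:ℕ)+2)) (Set.Ici r)
          ≤ ENNReal.ofReal r * 1 := by
            rw [← hpi]
            exact mul_le_mul_right prob_le_one _
        _ = ENNReal.ofReal r := mul_one _
        _ ≤ 1 := by
            rw [← ENNReal.ofReal_one]
            exact ENNReal.ofReal_le_ofReal hr1.le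
    · have hm := erTrunc_Ici_le ((2:ℝ) ^ ((i:ℕ)+2)) r hr1
      calc p i * erTrunc ((2:ℝ) ^ ((i:ℕ)+2)) (Set.Ici r)
          ≤ ENNReal.ofReal r * ENNReal.ofReal r⁻¹ := by
            rw [hpi]
            exact mul_le_mul_right hm _
        _ = ENNReal.ofReal (r * r⁻¹) := (ENNReal.ofReal_mul (by linarith)).symm
        _ = 1 := by
            rw [mul_inv_cancel₀ (by linarith), ENNReal.ofReal_one]

/-- (Items are indexed by `i : Fin n`, representing the item `j = i+1` of the
paper.) Let the marginal of item `i` be the equal-revenue distribution truncated at `2^(i+2)`,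
let `S` be a set of items, and let the pricing `p` set `p i = 2^(i+1)` for `i ∈ S` and
`p i = ∞` for `i ∉ S`. Then `|S|/3 ≤ R(p,F) ≤ |S|` for every compatible joint distribution `F`
(hence `|S|/3 ≤ R(p) ≤ |S|`), and moreover `n/3 ≤ R* ≤ n`. -/
theorem truncated_equal_revenue_pricing_bounds
    (n : ℕ) (B : BuyerRule n)
    (marg : Fin n → Measure ℝ) (hmarg : ∀ i : Fin n, marg i = erTrunc ((2 : ℝ) ^ ((i : ℕ) + 2)))
    (S : Finset (Fin n)) (p : Fin n → ℝ≥0∞)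
    (hp : ∀ i : Fin n, p i = if i ∈ S then ENNReal.ofReal ((2 : ℝ) ^ ((i : ℕ) + 1)) else ⊤) :
    (∀ F : Measure (Fin n → ℝ), Compatible marg F →
        (S.card : ℝ≥0∞) / 3 ≤ expRev B p F ∧ expRev B p F ≤ (S.card : ℝ≥0∞)) ∧
    (S.card : ℝ≥0∞) / 3 ≤ robustRev B marg p ∧ robustRev B marg p ≤ (S.card : ℝ≥0∞) ∧
    (n : ℝ≥0∞) / 3 ≤ optRobust B marg ∧ optRobust B marg ≤ (n : ℝ≥0∞) := by
  classical
  haveI hpm : ∀ i, IsProbabilityMeasure (marg i) := fun i => by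
    rw [hmarg]
    exact erTrunc_prob _ (one_le_pow₀ one_le_two)
  set Fpi : Measure (Fin n → ℝ) := Measure.pi marg with hFpi
  have hcompat : Compatible marg Fpi := ⟨inferInstance, fun j => pi_marginal marg j⟩
  -- generic upper bound for arbitrary pricings
  have hub : ∀ (q : Fin n → ℝ≥0∞) (F : Measure (Fin n → ℝ)), Compatible marg F →
      expRev B q F ≤ (n : ℝ≥0∞) := by
    intro q F hF
    refine le_trans (expRev_upper B marg hmarg q F hF) ?_
    calc ∑ i : Fin n, (if q i = ⊤ then 0 else 1 : ℝ≥0∞)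
        ≤ ∑ _i : Fin n, (1 : ℝ≥0∞) := Finset.sum_le_sum (fun i _ => by split <;> simp)
      _ = n := by simp
  -- upper bound for our pricing
  have hupper : ∀ F : Measure (Fin n → ℝ), Compatible marg F →
      expRev B p F ≤ (S.card : ℝ≥0∞) := by
    intro F hF
    refine le_trans (expRev_upper B marg hmarg p F hF) ?_
    calc ∑ i : Fin n, (if p i = ⊤ then 0 else 1 : ℝ≥0∞)
        ≤ ∑ i : Fin n, (if i ∈ S then 1 else 0 : ℝ≥0∞) := by
          apply Finset.sum_le_sum
          intro i _
          by_cases hi : i ∈ S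
          · split <;> simp [hi]
          · simp [hi, hp i]
      _ = (S.card : ℝ≥0∞) := by
          rw [Finset.sum_ite_mem, Finset.univ_inter]
          simp
  have hlower := fun F hF => expRev_lower B marg hmarg S p hp F hF
  refine ⟨fun F hF => ⟨hlower F hF, hupper F hF⟩, ?_, ?_, ?_, ?_⟩
  · exact le_iInf fun F => le_iInf fun hF => hlower F hF
  · exact iInf₂_le_of_le Fpi hcompat (hupper Fpi hcompat)
  · -- n/3 ≤ optRobust
    set puniv : Fin n → ℝ≥0∞ := fun i => ENNReal.ofReal ((2:ℝ) ^ ((i:ℕ)+1)) with hpuniv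
    have hpu : ∀ i : Fin n, puniv i
        = if i ∈ (Finset.univ : Finset (Fin n)) then ENNReal.ofReal ((2:ℝ) ^ ((i:ℕ)+1)) else ⊤ := by
      intro i; simp [hpuniv]
    refine le_iSup_of_le puniv ?_
    have hcard : (((Finset.univ : Finset (Fin n)).card : ℝ≥0∞)) / 3 = (n : ℝ≥0∞) / 3 := by
      simp
    rw [← hcard]
    exact le_iInf fun F => le_iInf fun hF =>
      expRev_lower B marg hmarg Finset.univ puniv hpu F hF
  · exact iSup_le fun q => iInf₂_le_of_le Fpi hcompat (hub q Fpi hcompat)
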